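/- Let H be a 3-uniform hypergraph on vertex set [n] with matching number at most s, and suppose that the set A of vertices of degree at least 3sn+1 has exactly s elements. Then B = [n] \ A is a weakly independent set, i.e., no edge of H is entirely contained in B. -/
import Mathlib


open Finset

/-- Degree of a vertex in a 3-graph. -/
def degH {n : ℕ} (H : Finset (Finset (Fin n))) (v : Fin n) : ℕ :=
  (H.filter (fun e => v ∈ e)).card

/-- `H` is a 3-uniform hypergraph. -/
def Uniform3 {n : ℕ} (H : Finset (Finset (Fin n))) : Prop :=
  ∀ e ∈ H, e.card = 3

/-- The matching number of `H` is at most `s`. -/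
def MatchingAtMost {n : ℕ} (H : Finset (Finset (Fin n))) (s : ℕ) : Prop :=
  ∀ M ⊆ H, (M : Set (Finset (Fin n))).Pairwise (fun e f => Disjoint e f) → M.card ≤ s

/-- `H` contains a copy of the hypergraph with edge set `F`. -/
def HasCopy {α : Type*} [DecidableEq α] {n : ℕ}
    (F : Set (Finset α)) (H : Finset (Finset (Fin n))) : Prop :=
  ∃ f : α → Fin n, Function.Injective f ∧ ∀ e ∈ F, e.image f ∈ H

/-- Number of edges of the Turán graph `T(n, r)`. -/
def turanEdges (n r : ℕ) : ℕ := (SimpleGraph.turanGraph n r).edgeFinset.card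

lemma pair_deg_le {n : ℕ} (H : Finset (Finset (Fin n)))
    (hU : ∀ e ∈ H, e.card = 3) {a x : Fin n} (hax : a ≠ x) :
    (H.filter (fun f => a ∈ f ∧ x ∈ f)).card ≤ n := by
  classical
  have key : ∀ f ∈ H.filter (fun f => a ∈ f ∧ x ∈ f), ∃ y, f = {a, x, y} := by
    intro f hf
    simp only [mem_filter] at hf
    obtain ⟨hfH, haf, hxf⟩ := hf
    have hsub : ({a, x} : Finset (Fin n)) ⊆ f := by
      intro z hz; simp at hz; rcases hz with rfl | rfl <;> assumption
    have hc2 : ({a, x} : Finset (Fin n)).card = 2 := by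
      rw [card_insert_of_notMem (by simpa using hax), card_singleton]
    have hc1 : (f \ {a, x}).card = 1 := by
      rw [card_sdiff_of_subset hsub, hU f hfH, hc2]
    obtain ⟨y, hy⟩ := card_eq_one.mp hc1
    refine ⟨y, ?_⟩
    have : ({a, x} : Finset (Fin n)) ∪ (f \ {a, x}) = f := union_sdiff_of_subset hsub
    rw [hy] at this
    rw [← this]
    ext z; simp [or_assoc]
  choose g hg using key
  have : (H.filter (fun f => a ∈ f ∧ x ∈ f)).card ≤ (univ : Finset (Fin n)).card := by
    apply card_le_card_of_injOn
      (fun f => if h : f ∈ H.filter (fun f => a ∈ f ∧ x ∈ f) then g f h else a)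
      (fun _ _ => mem_univ _)
    intro f1 h1 f2 h2 hval
    simp only [mem_coe] at h1 h2
    simp only [dif_pos h1, dif_pos h2] at hval
    rw [hg f1 h1, hg f2 h2, hval]
  simpa using this

theorem stmt_2 {n s : ℕ} (H : Finset (Finset (Fin n)))
    (hU : Uniform3 H) (hM : MatchingAtMost H s)
    (hA : (Finset.univ.filter (fun v => 3 * s * n + 1 ≤ degH H v)).card = s) :
    ∀ e ∈ H, ¬ e ⊆ Finset.univ \ Finset.univ.filter (fun v => 3 * s * n + 1 ≤ degH H v) := by
  classical
  intro e he hsub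
  set A := Finset.univ.filter (fun v => 3 * s * n + 1 ≤ degH H v) with hAdef
  have heA : A ∩ e = ∅ := by
    rw [eq_empty_iff_forall_notMem]
    intro v hv
    rw [mem_inter] at hv
    have := hsub hv.2
    rw [mem_sdiff] at this
    exact this.2 hv.1
  have key : ∀ k, k ≤ s → ∃ M : Finset (Finset (Fin n)),
      M ⊆ H ∧ (M : Set (Finset (Fin n))).Pairwise (fun a b => Disjoint a b) ∧
      M.card = k + 1 ∧ (A ∩ M.biUnion id).card = k := by
    intro k
    induction k with
    | zero =>
      intro _
      exact ⟨{e}, by simpa using he, by simp, by simp, by simp [heA]⟩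
    | succ k ih =>
      intro hk1
      obtain ⟨M, hMH, hMp, hMc, hAV⟩ := ih (Nat.le_of_succ_le hk1)
      set V := M.biUnion id with hVdef
      have hVcard : V.card ≤ 3 * (k + 1) := by
        calc V.card ≤ ∑ g ∈ M, (id g).card := card_biUnion_le
          _ = ∑ g ∈ M, 3 := Finset.sum_congr rfl (fun g hg => hU g (hMH hg))
          _ = 3 * (k + 1) := by rw [Finset.sum_const, hMc, smul_eq_mul, Nat.mul_comm]
      -- pick a vertex a ∈ A not covered by V
      have hex : ∃ a, a ∈ A ∧ a ∉ V := by
        by_contra h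
        push_neg at h
        have hsubAV : A ⊆ V := fun x hx => h x hx
        have : A ∩ V = A := inter_eq_left.mpr hsubAV
        rw [this, hA] at hAV
        omega
      obtain ⟨a, haA, haV⟩ := hex
      set T := V ∪ (A \ V).erase a with hTdef
      have haT : a ∉ T := by
        simp only [hTdef, mem_union, mem_erase]
        rintro (h | h)
        · exact haV h
        · exact h.1 rfl
      have hAVs : (A \ V).card = s - k := by
        have := card_sdiff_add_card_inter A V
        rw [hAV, hA] at this
        omega
      have haAV : a ∈ A \ V := mem_sdiff.mpr ⟨haA, haV⟩
      have hTcard : T.card ≤ 3 * s := by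
        have h1 : T.card ≤ V.card + ((A \ V).erase a).card := card_union_le _ _
        have h2 : ((A \ V).erase a).card = s - k - 1 := by
          rw [card_erase_of_mem haAV, hAVs]
        omega
      -- degree of a
      have hdeg : 3 * s * n + 1 ≤ (H.filter (fun f => a ∈ f)).card := by
        have := (mem_filter.mp haA).2
        exact this
      -- find an edge through a disjoint from T
      have hef : ∃ f ∈ H, a ∈ f ∧ Disjoint f T := by
        by_contra h
        push_neg at h
        have hcover : H.filter (fun f => a ∈ f) ⊆
            T.biUnion (fun x => H.filter (fun f => a ∈ f ∧ x ∈ f)) := by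
          intro f hf
          rw [mem_filter] at hf
          have := h f hf.1 hf.2
          rw [Finset.not_disjoint_iff] at this
          obtain ⟨x, hxf, hxT⟩ := this
          exact mem_biUnion.mpr ⟨x, hxT, mem_filter.mpr ⟨hf.1, hf.2, hxf⟩⟩
        have hle : (H.filter (fun f => a ∈ f)).card ≤ T.card * n := by
          calc (H.filter (fun f => a ∈ f)).card
              ≤ ∑ x ∈ T, (H.filter (fun f => a ∈ f ∧ x ∈ f)).card :=
                le_trans (card_le_card hcover) card_biUnion_le
            _ ≤ ∑ _x ∈ T, n := Finset.sum_le_sum (fun x hx =>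
                pair_deg_le H hU (fun hax => haT (hax ▸ hx)))
            _ = T.card * n := by rw [Finset.sum_const, smul_eq_mul]
        have : T.card * n ≤ 3 * s * n := Nat.mul_le_mul_right n hTcard
        omega
      obtain ⟨f, hfH, haf, hfT⟩ := hef
      have hfV : Disjoint f V := hfT.mono_right subset_union_left
      have hfM : f ∉ M := by
        intro hfM
        exact haV (mem_biUnion.mpr ⟨f, hfM, haf⟩)
      refine ⟨insert f M, ?_, ?_, ?_, ?_⟩
      · exact insert_subset hfH hMH
      · intro x hx y hy hxy
        simp only [coe_insert, Set.mem_insert_iff, mem_coe] at hx hy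
        rcases hx with rfl | hx <;> rcases hy with rfl | hy
        · exact absurd rfl hxy
        · exact hfV.mono_right (subset_biUnion_of_mem id hy)
        · exact (hfV.mono_right (subset_biUnion_of_mem id hx)).symm
        · exact hMp hx hy hxy
      · rw [card_insert_of_notMem hfM, hMc]
      · have hbi : (insert f M).biUnion id = f ∪ V := by
          rw [biUnion_insert]; rfl
        rw [hbi]
        have hAf : A ∩ f = {a} := by
          ext x
          simp only [mem_inter, mem_singleton]
          constructor
          · rintro ⟨hxA, hxf⟩
            by_contra hxa
            have hxT : x ∈ T := by
              by_cases hxV : x ∈ V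
              · exact mem_union_left _ hxV
              · exact mem_union_right _ (mem_erase.mpr ⟨hxa, mem_sdiff.mpr ⟨hxA, hxV⟩⟩)
            exact (disjoint_left.mp hfT) hxf hxT
          · rintro rfl; exact ⟨haA, haf⟩
        rw [inter_union_distrib_left, hAf]
        rw [card_union_of_disjoint (by
          simp only [disjoint_singleton_left, mem_inter]
          exact fun h => haV h.2)]
        rw [card_singleton, hAV]
        omega
  obtain ⟨M, hMH, hMp, hMc, _⟩ := key s le_rfl
  have := hM M hMH hMp
  omega
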